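/- Let δ, γ ∈ (−1, +∞) and let h₁, h₂ : [0,∞) → ℝ be continuous with 0 ≤ hᵢ(x) ≤ 1 for all x ≥ 0 (i = 1, 2). Let f(w) := exp(−2w) and, for i = 1, 2 and w ≥ 0, let wᵢ(w) := ∫₀ʷ z(1 + γ hᵢ(z))/(1 + δ hᵢ(z)) dz. Then for every x ≥ 0, ∫₀ˣ |f(w₁(w)) − f(w₂(w))| dw ≤ (√π·|δ−γ|·max(1,1+δ)^{3/2} / (4·min(1,1+δ)²·min(1,1+γ)^{3/2})) · ‖h₁ − h₂‖∞, where ‖h₁ − h₂‖∞ := sup_{x ≥ 0} |h₁(x) − h₂(x)|. -/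

import Mathlib

open Real Filter Set

lemma abs_exp_neg_sub (a b : ℝ) : |Real.exp (-a) - Real.exp (-b)| ≤ |a - b| * Real.exp (-(min a b)) := by
  wlog h : a ≤ b generalizing a b
  · rw [abs_sub_comm, abs_sub_comm a b, min_comm]
    exact this b a (le_of_not_ge h)
  rw [min_eq_left h, abs_sub_comm a, abs_of_nonneg (sub_nonneg.2 h),
    abs_of_nonneg (sub_nonneg.2 (exp_le_exp.2 (neg_le_neg h)))]
  have h1 : Real.exp (-b) = Real.exp (-a) * Real.exp (a - b) := by
    rw [← Real.exp_add]; ring_nf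
  have h2 : (a - b) + 1 ≤ Real.exp (a - b) := Real.add_one_le_exp _
  nlinarith [Real.exp_pos (-a)]

lemma gauss_moment {c : ℝ} (hc : 0 < c) :
    ∫ x in Ioi (0:ℝ), x ^ 2 * Real.exp (-(c * x ^ 2)) =
      c ^ (-(3:ℝ)/2) * Real.sqrt π / 4 := by
  have h1 : ∫ x in Ioi (0:ℝ), x ^ 2 * Real.exp (-(c * x ^ 2)) =
      ∫ x in Ioi (0:ℝ), x ^ (2:ℝ) * Real.exp (-c * x ^ (2:ℝ)) := by
    refine MeasureTheory.setIntegral_congr_fun measurableSet_Ioi (fun x hx => ?_)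
    rw [Real.rpow_two, ← Real.rpow_natCast x 2]
    norm_num
  rw [h1, integral_rpow_mul_exp_neg_mul_rpow two_pos (by norm_num : (-1:ℝ) < 2) hc]
  have h2 : Real.Gamma ((2 + 1) / 2) = Real.sqrt π / 2 := by
    have : ((2:ℝ) + 1) / 2 = 1/2 + 1 := by norm_num
    rw [this, Real.Gamma_add_one (by norm_num), Real.Gamma_one_half_eq]
    ring
  rw [h2]
  ring_nf

theorem integral_abs_diff_exp_estimate (δ γ : ℝ) (hδ : -1 < δ) (hγ : -1 < γ)
    (h₁ h₂ : ℝ → ℝ)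
    (hcont₁ : ContinuousOn h₁ (Set.Ici 0)) (hcont₂ : ContinuousOn h₂ (Set.Ici 0))
    (hb₁ : ∀ x ≥ (0:ℝ), 0 ≤ h₁ x ∧ h₁ x ≤ 1)
    (hb₂ : ∀ x ≥ (0:ℝ), 0 ≤ h₂ x ∧ h₂ x ≤ 1) :
    ∀ x ≥ (0:ℝ),
      (∫ w in (0:ℝ)..x,
        |Real.exp (-(2 * ∫ z in (0:ℝ)..w, z*(1+γ*h₁ z)/(1+δ*h₁ z))) -
          Real.exp (-(2 * ∫ z in (0:ℝ)..w, z*(1+γ*h₂ z)/(1+δ*h₂ z)))|) ≤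
      (Real.sqrt π * |δ-γ| * (max 1 (1+δ)) ^ ((3:ℝ)/2) /
        (4 * (min 1 (1+δ))^2 * (min 1 (1+γ)) ^ ((3:ℝ)/2))) *
      ⨆ t : Set.Ici (0:ℝ), |h₁ t - h₂ t| := by
  intro x hx
  set mδ := min 1 (1+δ) with hmδ_def
  set Mδ := max 1 (1+δ) with hMδ_def
  set mγ := min 1 (1+γ) with hmγ_def
  have hmδ : 0 < mδ := lt_min one_pos (by linarith)
  have hMδ : 0 < Mδ := lt_of_lt_of_le one_pos (le_max_left _ _)
  have hmγ : 0 < mγ := lt_min one_pos (by linarith)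
  set c := mγ / Mδ with hc_def
  have hc : 0 < c := div_pos hmγ hMδ
  set S := ⨆ t : Set.Ici (0:ℝ), |h₁ t - h₂ t| with hS_def
  have hbdd : BddAbove (Set.range fun t : Set.Ici (0:ℝ) => |h₁ t - h₂ t|) := by
    refine ⟨1, fun y hy => ?_⟩
    obtain ⟨t, rfl⟩ := hy
    have H1 := hb₁ t t.2
    have H2 := hb₂ t t.2
    rw [abs_le]; constructor <;> linarith
  have hS_le : ∀ z : ℝ, 0 ≤ z → |h₁ z - h₂ z| ≤ S :=
    fun z hz => le_ciSup hbdd ⟨z, hz⟩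
  have hS0 : 0 ≤ S := le_trans (abs_nonneg _) (hS_le 0 le_rfl)
  have hden_lb : ∀ a : ℝ, 0 ≤ a → a ≤ 1 → mδ ≤ 1 + δ * a := by
    intro a ha ha1
    rcases le_or_gt 0 δ with h | h
    · calc mδ ≤ 1 := min_le_left _ _
        _ ≤ 1 + δ * a := by nlinarith
    · calc mδ ≤ 1 + δ := min_le_right _ _
        _ ≤ 1 + δ * a := by nlinarith
  have hden_ub : ∀ a : ℝ, 0 ≤ a → a ≤ 1 → 1 + δ * a ≤ Mδ := by
    intro a ha ha1
    rcases le_or_gt 0 δ with h | h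
    · calc 1 + δ * a ≤ 1 + δ := by nlinarith
        _ ≤ Mδ := le_max_right _ _
    · calc 1 + δ * a ≤ 1 := by nlinarith
        _ ≤ Mδ := le_max_left _ _
  have hnum_lb : ∀ a : ℝ, 0 ≤ a → a ≤ 1 → mγ ≤ 1 + γ * a := by
    intro a ha ha1
    rcases le_or_gt 0 γ with h | h
    · calc mγ ≤ 1 := min_le_left _ _
        _ ≤ 1 + γ * a := by nlinarith
    · calc mγ ≤ 1 + γ := min_le_right _ _
        _ ≤ 1 + γ * a := by nlinarith
  set g₁ : ℝ → ℝ := fun z => z * (1 + γ * h₁ z) / (1 + δ * h₁ z) with hg₁_def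
  set g₂ : ℝ → ℝ := fun z => z * (1 + γ * h₂ z) / (1 + δ * h₂ z) with hg₂_def
  have hgcont : ∀ (h : ℝ → ℝ), ContinuousOn h (Set.Ici 0) →
      (∀ x ≥ (0:ℝ), 0 ≤ h x ∧ h x ≤ 1) →
      ContinuousOn (fun z => z * (1 + γ * h z) / (1 + δ * h z)) (Set.Ici 0) := by
    intro h hc hb
    refine ContinuousOn.div ?_ ?_ ?_
    · exact (continuousOn_id.mul (continuousOn_const.add (continuousOn_const.mul hc)))
    · exact continuousOn_const.add (continuousOn_const.mul hc)
    · intro z hz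
      have hz1 := hden_lb (h z) (hb z hz).1 (hb z hz).2
      exact ne_of_gt (lt_of_lt_of_le hmδ hz1)
  have hg₁cont : ContinuousOn g₁ (Set.Ici 0) := hgcont h₁ hcont₁ hb₁
  have hg₂cont : ContinuousOn g₂ (Set.Ici 0) := hgcont h₂ hcont₂ hb₂
  have hint : ∀ (g : ℝ → ℝ), ContinuousOn g (Set.Ici 0) → ∀ w : ℝ, 0 ≤ w →
      IntervalIntegrable g MeasureTheory.volume 0 w := by
    intro g hg w hw
    apply ContinuousOn.intervalIntegrable
    rw [uIcc_of_le hw]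
    exact hg.mono (Icc_subset_Ici_self)
  set W₁ : ℝ → ℝ := fun w => ∫ z in (0:ℝ)..w, g₁ z with hW₁_def
  set W₂ : ℝ → ℝ := fun w => ∫ z in (0:ℝ)..w, g₂ z with hW₂_def
  have hW_lb : ∀ (h : ℝ → ℝ), ContinuousOn h (Set.Ici 0) →
      (∀ x ≥ (0:ℝ), 0 ≤ h x ∧ h x ≤ 1) → ∀ w : ℝ, 0 ≤ w →
      c * w ^ 2 / 2 ≤ ∫ z in (0:ℝ)..w, z * (1 + γ * h z) / (1 + δ * h z) := by
    intro h hcont hb w hw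
    have h1 : ∫ z in (0:ℝ)..w, c * z = c * w ^ 2 / 2 := by
      rw [intervalIntegral.integral_const_mul, integral_id]
      ring
    rw [← h1]
    refine intervalIntegral.integral_mono_on hw
      ((continuous_const.mul continuous_id).intervalIntegrable _ _)
      (hint _ (hgcont h hcont hb) w hw) ?_
    intro z hz
    have hz0 : 0 ≤ z := hz.1
    have H := hb z hz0
    have hd := hden_lb (h z) H.1 H.2
    have hd2 := hden_ub (h z) H.1 H.2
    have hn := hnum_lb (h z) H.1 H.2
    rw [mul_div_assoc]
    have hr : c ≤ (1 + γ * h z) / (1 + δ * h z) :=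
      div_le_div₀ (by linarith) hn (by linarith) hd2
    calc c * z = z * c := mul_comm _ _
      _ ≤ z * ((1 + γ * h z) / (1 + δ * h z)) := mul_le_mul_of_nonneg_left hr hz0
  set K := |δ - γ| * S / mδ ^ 2 with hK_def
  have hK0 : 0 ≤ K := by positivity
  have hWdiff : ∀ w : ℝ, 0 ≤ w → |W₁ w - W₂ w| ≤ K * w ^ 2 / 2 := by
    intro w hw
    have hi₁ := hint g₁ hg₁cont w hw
    have hi₂ := hint g₂ hg₂cont w hw
    have h1 : W₁ w - W₂ w = ∫ z in (0:ℝ)..w, (g₁ z - g₂ z) :=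
      (intervalIntegral.integral_sub hi₁ hi₂).symm
    rw [h1]
    calc |∫ z in (0:ℝ)..w, (g₁ z - g₂ z)| ≤ ∫ z in (0:ℝ)..w, |g₁ z - g₂ z| :=
          intervalIntegral.abs_integral_le_integral_abs hw
      _ ≤ ∫ z in (0:ℝ)..w, K * z := by
          refine intervalIntegral.integral_mono_on hw ((hi₁.sub hi₂).abs)
            ((continuous_const.mul continuous_id).intervalIntegrable _ _) ?_
          intro z hz
          have hz0 : 0 ≤ z := hz.1
          have H1 := hb₁ z hz0
          have H2 := hb₂ z hz0
          have hd1 := hden_lb (h₁ z) H1.1 H1.2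
          have hd2 := hden_lb (h₂ z) H2.1 H2.2
          have hne1 : (1 + δ * h₁ z) ≠ 0 := ne_of_gt (lt_of_lt_of_le hmδ hd1)
          have hne2 : (1 + δ * h₂ z) ≠ 0 := ne_of_gt (lt_of_lt_of_le hmδ hd2)
          have key : g₁ z - g₂ z =
              z * ((γ - δ) * (h₁ z - h₂ z)) / ((1 + δ * h₁ z) * (1 + δ * h₂ z)) := by
            show z * (1 + γ * h₁ z) / (1 + δ * h₁ z) -
              z * (1 + γ * h₂ z) / (1 + δ * h₂ z) = _
            rw [div_sub_div _ _ hne1 hne2]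
            ring
          rw [key, abs_div]
          have hdenpos : 0 < (1 + δ * h₁ z) * (1 + δ * h₂ z) := by nlinarith
          rw [abs_of_pos hdenpos]
          have hnum : |z * ((γ - δ) * (h₁ z - h₂ z))| ≤ z * (|δ - γ| * S) := by
            rw [abs_mul, abs_mul, abs_of_nonneg hz0, abs_sub_comm]
            exact mul_le_mul_of_nonneg_left
              (mul_le_mul_of_nonneg_left (hS_le z hz0) (abs_nonneg _)) hz0
          calc |z * ((γ - δ) * (h₁ z - h₂ z))| / ((1 + δ * h₁ z) * (1 + δ * h₂ z))
              ≤ z * (|δ - γ| * S) / (mδ ^ 2) := by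
                refine div_le_div₀ (by positivity) hnum (by positivity) ?_
                nlinarith
            _ = K * z := by rw [hK_def]; ring
      _ = K * w ^ 2 / 2 := by
          rw [intervalIntegral.integral_const_mul, integral_id]; ring
  have hpt : ∀ w : ℝ, 0 ≤ w →
      |Real.exp (-(2 * W₁ w)) - Real.exp (-(2 * W₂ w))| ≤
        K * (w ^ 2 * Real.exp (-(c * w ^ 2))) := by
    intro w hw
    have h1 := abs_exp_neg_sub (2 * W₁ w) (2 * W₂ w)
    have hlb₁ : c * w ^ 2 / 2 ≤ W₁ w := hW_lb h₁ hcont₁ hb₁ w hw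
    have hlb₂ : c * w ^ 2 / 2 ≤ W₂ w := hW_lb h₂ hcont₂ hb₂ w hw
    have hmin : c * w ^ 2 ≤ min (2 * W₁ w) (2 * W₂ w) := by
      rw [le_min_iff]; constructor <;> linarith
    have h2 : Real.exp (-(min (2 * W₁ w) (2 * W₂ w))) ≤ Real.exp (-(c * w ^ 2)) :=
      Real.exp_le_exp.2 (neg_le_neg hmin)
    have h3 : |2 * W₁ w - 2 * W₂ w| ≤ K * w ^ 2 := by
      have h4 := hWdiff w hw
      have h5 : |2 * W₁ w - 2 * W₂ w| = 2 * |W₁ w - W₂ w| := by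
        rw [show 2 * W₁ w - 2 * W₂ w = 2 * (W₁ w - W₂ w) from by ring, abs_mul,
          abs_of_nonneg (by norm_num : (0:ℝ) ≤ 2)]
      rw [h5]; linarith
    calc |Real.exp (-(2 * W₁ w)) - Real.exp (-(2 * W₂ w))|
        ≤ |2 * W₁ w - 2 * W₂ w| * Real.exp (-(min (2 * W₁ w) (2 * W₂ w))) := h1
      _ ≤ (K * w ^ 2) * Real.exp (-(c * w ^ 2)) :=
          mul_le_mul h3 h2 (le_of_lt (Real.exp_pos _)) (by positivity)
      _ = K * (w ^ 2 * Real.exp (-(c * w ^ 2))) := by ring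
  have hWcont : ∀ (g : ℝ → ℝ), ContinuousOn g (Set.Ici 0) →
      ContinuousOn (fun w => ∫ z in (0:ℝ)..w, g z) (Set.Icc 0 x) := by
    intro g hg
    have heq : Set.Icc (0:ℝ) x = Set.uIcc 0 x := (uIcc_of_le hx).symm
    rw [heq]
    refine intervalIntegral.continuousOn_primitive_interval ?_
    rw [← heq]
    exact (hg.mono Icc_subset_Ici_self).integrableOn_compact isCompact_Icc
  have hLHScont : ContinuousOn
      (fun w => |Real.exp (-(2 * W₁ w)) - Real.exp (-(2 * W₂ w))|) (Set.Icc 0 x) := by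
    have c₁ := hWcont g₁ hg₁cont
    have c₂ := hWcont g₂ hg₂cont
    exact (((Real.continuous_exp.comp_continuousOn ((continuousOn_const.mul c₁).neg)).sub
      (Real.continuous_exp.comp_continuousOn ((continuousOn_const.mul c₂).neg))).abs)
  have hLHSint : IntervalIntegrable
      (fun w => |Real.exp (-(2 * W₁ w)) - Real.exp (-(2 * W₂ w))|)
      MeasureTheory.volume 0 x := by
    apply ContinuousOn.intervalIntegrable
    rw [uIcc_of_le hx]; exact hLHScont
  have hGint : MeasureTheory.IntegrableOn (fun w : ℝ => w ^ 2 * Real.exp (-(c * w ^ 2)))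
      (Ioi 0) := by
    have h0 := integrableOn_rpow_mul_exp_neg_mul_sq hc (by norm_num : (-1:ℝ) < 2)
    refine h0.congr_fun (fun w hw => ?_) measurableSet_Ioi
    rw [← Real.rpow_natCast w 2]
    norm_num
  calc (∫ w in (0:ℝ)..x, |Real.exp (-(2 * W₁ w)) - Real.exp (-(2 * W₂ w))|)
      ≤ ∫ w in (0:ℝ)..x, K * (w ^ 2 * Real.exp (-(c * w ^ 2))) := by
        refine intervalIntegral.integral_mono_on hx hLHSint ?_ ?_
        · exact ((continuous_const.mul ((continuous_pow 2).mul
            (Real.continuous_exp.comp ((continuous_const.mul (continuous_pow 2)).neg)))).intervalIntegrable _ _)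
        · intro w hw; exact hpt w hw.1
    _ = K * ∫ w in (0:ℝ)..x, w ^ 2 * Real.exp (-(c * w ^ 2)) := by
        rw [intervalIntegral.integral_const_mul]
    _ ≤ K * ∫ w in Ioi (0:ℝ), w ^ 2 * Real.exp (-(c * w ^ 2)) := by
        refine mul_le_mul_of_nonneg_left ?_ hK0
        rw [intervalIntegral.integral_of_le hx]
        refine MeasureTheory.setIntegral_mono_set hGint ?_ ?_
        · filter_upwards with w
          positivity
        · exact MeasureTheory.ae_of_all _ Ioc_subset_Ioi_self
    _ = K * (c ^ (-(3:ℝ)/2) * Real.sqrt π / 4) := by rw [gauss_moment hc]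
    _ = (Real.sqrt π * |δ-γ| * Mδ ^ ((3:ℝ)/2) / (4 * mδ^2 * mγ ^ ((3:ℝ)/2))) * S := by
        have hcrw : c ^ (-(3:ℝ)/2) = Mδ ^ ((3:ℝ)/2) / mγ ^ ((3:ℝ)/2) := by
          rw [hc_def]
          rw [show (-(3:ℝ)/2) = -((3:ℝ)/2) by norm_num]
          rw [Real.rpow_neg (by positivity), Real.div_rpow hmγ.le hMδ.le, inv_div]
        rw [hcrw, hK_def]
        have hmγp : (0:ℝ) < mγ ^ ((3:ℝ)/2) := Real.rpow_pos_of_pos hmγ _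
        field_simp
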